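/- Let K be a positive integer and Δx := 2π/K. Let u : ℝ → ℝ^K (indexed by ℤ/Kℤ) be differentiable with derivative u̇, satisfying the average-difference method for the sine-Gordon equation: for all t and all k ∈ ℤ/Kℤ, (u̇_{k+1}(t) − u̇_k(t))/Δx = (sin u_{k+1}(t) + sin u_k(t))/2. Suppose ∑_{k=1}^{K} cos u_k(t) ≠ 0 for all t. Then for all t and all k, u̇_k(t) = (δ_FD^{-1}(sin∘u(t)))_k − [∑_{j=1}^{K} cos u_j(t) · (δ_FD^{-1}(sin∘u(t)))_j] / [∑_{j=1}^{K} cos u_j(t)], where sin∘u(t) denotes the vector (sin u_k(t))_{k}. -/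

import Mathlib

open Real Finset

/-- The trapezoidal partial sum `Δx(v₀/2 + ∑_{i=1}^{n−1} vᵢ + vₙ/2)` (with `Δx = 2π/K`
and periodic indexing, so that `v₀ = v_K`). -/
noncomputable def partialTrap (K : ℕ) (v : ZMod K → ℝ) (n : ℕ) : ℝ :=
  (2 * π / K) * (v 0 / 2 + (∑ i ∈ Finset.Ico 1 n, v (i : ZMod K)) + v (n : ZMod K) / 2)

/-- The trapezoidal antiderivative `δ_FD⁻¹`: for `k = 1,…,K` (periodic indexing),
`(δ_FD⁻¹v)_k = Δx(v₀/2 + ∑_{i=1}^{k−1} vᵢ + v_k/2) −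
(Δx²/(2π)) ∑_{i=1}^{K} (v₀/2 + ∑_{j=1}^{i−1} vⱼ + vᵢ/2)`. -/
noncomputable def deltaFDinv (K : ℕ) (v : ZMod K → ℝ) (k : ZMod K) : ℝ :=
  partialTrap K v (if k.val = 0 then K else k.val) -
    (1 / (2 * π)) * (2 * π / K) * ∑ i ∈ Finset.Icc 1 K, partialTrap K v i

/-- A solution of the average-difference method `δ⁺ₓ u̇_k = μ⁺ₓ sin u_k` for the
sine-Gordon equation with `∑_k cos u_k(t) ≠ 0` satisfies the trapezoidal integral form
`u̇_k = (δ_FD⁻¹ sin∘u)_k − (∑_j cos u_j ⬝ (δ_FD⁻¹ sin∘u)_j)/(∑_j cos u_j)`. -/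
theorem averageDifference_sineGordon_integral_form (K : ℕ) [NeZero K]
    (u udot : ℝ → ZMod K → ℝ)
    (hderiv : ∀ t : ℝ, ∀ k : ZMod K, HasDerivAt (fun s => u s k) (udot t k) t)
    (hscheme : ∀ t : ℝ, ∀ k : ZMod K,
      (udot t (k + 1) - udot t k) / (2 * π / K) =
        (Real.sin (u t (k + 1)) + Real.sin (u t k)) / 2)
    (hcos : ∀ t : ℝ, (∑ k : ZMod K, Real.cos (u t k)) ≠ 0) :
    ∀ t : ℝ, ∀ k : ZMod K,
      udot t k = deltaFDinv K (fun j => Real.sin (u t j)) k -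
        (∑ j : ZMod K, Real.cos (u t j) * deltaFDinv K (fun i => Real.sin (u t i)) j) /
          (∑ j : ZMod K, Real.cos (u t j)) := by
  have hπ : (0:ℝ) < π := Real.pi_pos
  have hKpos : (0:ℝ) < (K:ℝ) := by exact_mod_cast Nat.pos_of_ne_zero (NeZero.ne K)
  have hΔx : (2 * π / (K:ℝ)) ≠ 0 := by positivity
  -- rewritten scheme
  have hstep : ∀ t : ℝ, ∀ k : ZMod K,
      udot t (k+1) - udot t k
        = (2*π/(K:ℝ)) * ((Real.sin (u t (k+1)) + Real.sin (u t k))/2) := by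
    intro t k
    have h := hscheme t k
    field_simp at h ⊢
    linarith
  -- conservation: the sum of sines vanishes
  have hS : ∀ t : ℝ, (∑ k : ZMod K, Real.sin (u t k)) = 0 := by
    intro t
    have hre : ∀ f : ZMod K → ℝ, ∑ k : ZMod K, f (k+1) = ∑ k : ZMod K, f k := by
      intro f
      exact Fintype.sum_equiv (Equiv.addRight (1 : ZMod K)) (fun k => f (k+1)) f
        (fun k => rfl)
    have h0 : ∑ k : ZMod K, (udot t (k+1) - udot t k) = 0 := by
      rw [Finset.sum_sub_distrib, hre (udot t)]
      ring
    have h1 : ∑ k : ZMod K, (udot t (k+1) - udot t k)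
        = (2*π/(K:ℝ)) * ∑ k : ZMod K, Real.sin (u t k) := by
      rw [Finset.sum_congr rfl (fun k _ => hstep t k), ← Finset.mul_sum]
      congr 1
      calc ∑ k : ZMod K, (Real.sin (u t (k+1)) + Real.sin (u t k))/2
          = ((∑ k : ZMod K, Real.sin (u t (k+1)))
              + ∑ k : ZMod K, Real.sin (u t k))/2 := by
            rw [← Finset.sum_add_distrib, ← Finset.sum_div]
        _ = ∑ k : ZMod K, Real.sin (u t k) := by
            rw [hre (fun k => Real.sin (u t k))]; ring
    rw [h1] at h0
    exact (mul_eq_zero.mp h0).resolve_left hΔx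
  -- derivative of the conserved quantity
  have hchain : ∀ t : ℝ, (∑ k : ZMod K, Real.cos (u t k) * udot t k) = 0 := by
    intro t
    have hd : HasDerivAt (fun s => ∑ k : ZMod K, Real.sin (u s k))
        (∑ k : ZMod K, Real.cos (u t k) * udot t k) t :=
      HasDerivAt.fun_sum (fun k _ => (hderiv t k).sin)
    have he : (fun s => ∑ k : ZMod K, Real.sin (u s k)) = fun _ => (0:ℝ) :=
      funext fun s => hS s
    rw [he] at hd
    exact hd.unique (hasDerivAt_const t 0)
  -- telescoping
  have tel : ∀ t : ℝ, ∀ n : ℕ, 1 ≤ n →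
      udot t ((n : ℕ) : ZMod K)
        = udot t 0 + partialTrap K (fun j => Real.sin (u t j)) n := by
    intro t n hn
    induction n, hn using Nat.le_induction with
    | base =>
      have h := hstep t 0
      rw [zero_add] at h
      simp only [partialTrap, Finset.Ico_self, Finset.sum_empty, Nat.cast_one]
      linarith
    | succ n hn ih =>
      have h := hstep t ((n : ℕ) : ZMod K)
      have hcast : ((n : ZMod K) + 1) = (((n+1 : ℕ)) : ZMod K) := by push_cast; ring
      rw [hcast] at h
      simp only [partialTrap] at ih ⊢
      rw [Finset.sum_Ico_succ_top hn]
      push_cast at ih h ⊢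
      linarith
  intro t k
  set C : ℝ := (1 / (2 * π)) * (2 * π / K) *
      ∑ i ∈ Finset.Icc 1 K, partialTrap K (fun j => Real.sin (u t j)) i with hC
  have hDval : ∀ j : ZMod K,
      deltaFDinv K (fun i => Real.sin (u t i)) j = udot t j - udot t 0 - C := by
    intro j
    have hP : partialTrap K (fun i => Real.sin (u t i)) (if j.val = 0 then K else j.val)
        = udot t j - udot t 0 := by
      by_cases h0 : j.val = 0
      · have hj : j = 0 := (ZMod.val_eq_zero j).mp h0
        rw [if_pos h0, hj]
        have hK1 : 1 ≤ K := Nat.one_le_iff_ne_zero.mpr (NeZero.ne K)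
        have h := tel t K hK1
        rw [ZMod.natCast_self] at h
        linarith
      · rw [if_neg h0]
        have hj1 : 1 ≤ j.val := Nat.one_le_iff_ne_zero.mpr h0
        have h := tel t j.val hj1
        rw [ZMod.natCast_rightInverse j] at h
        linarith
    simp only [deltaFDinv, hP, ← hC]
  have hsum : (∑ j : ZMod K, Real.cos (u t j) * deltaFDinv K (fun i => Real.sin (u t i)) j)
      = -(udot t 0 + C) * ∑ j : ZMod K, Real.cos (u t j) := by
    calc (∑ j : ZMod K, Real.cos (u t j) * deltaFDinv K (fun i => Real.sin (u t i)) j)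
        = ∑ j : ZMod K, (Real.cos (u t j) * udot t j
            - Real.cos (u t j) * (udot t 0 + C)) := by
          refine Finset.sum_congr rfl fun j _ => ?_
          rw [hDval j]; ring
      _ = (∑ j : ZMod K, Real.cos (u t j) * udot t j)
            - (∑ j : ZMod K, Real.cos (u t j)) * (udot t 0 + C) := by
          rw [Finset.sum_sub_distrib, ← Finset.sum_mul]
      _ = -(udot t 0 + C) * ∑ j : ZMod K, Real.cos (u t j) := by
          rw [hchain t]; ring
  rw [hDval k, hsum]
  have hc := hcos t
  field_simp
  ring
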